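/- arXiv:2605.28341 — 3 statements merged into one kernel-verified Lean document; each statement's English description precedes it below -/
import Mathlib

section
/- Suppose T = β_0 D + Σ_{k=1}^p φ_k Z_k + ε with E[ε | Z] = 0, where Z = (Z_1,...,Z_p) are mutually independent with means ζ_j. Assume E[(Z_1 − ζ_1)(Z_2 − ζ_2) D] ≠ 0. Then β_0 = E[(Z_1 − ζ_1)(Z_2 − ζ_2) T] / E[(Z_1 − ζ_1)(Z_2 − ζ_2) D]. -/
open MeasureTheory ProbabilityTheory

/-- Interaction-based identification: under the structural model
`T = β₀ D + Σ φ_k Z_k + ε` with `E[ε ∣ Z] = 0` and mutually independent instruments,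
if `E[(Z₁−ζ₁)(Z₂−ζ₂)D] ≠ 0` then
`β₀ = E[(Z₁−ζ₁)(Z₂−ζ₂)T] / E[(Z₁−ζ₁)(Z₂−ζ₂)D]`. -/
theorem interaction_ratio_identifies_beta
    {Ω : Type*} [MeasurableSpace Ω] (μ : Measure Ω) [IsProbabilityMeasure μ]
    {p : ℕ} (hp : 2 ≤ p) (Z : Fin p → Ω → ℝ) (T D ε : Ω → ℝ)
    (hmeas : ∀ i, Measurable (Z i)) (hTmeas : Measurable T) (hDmeas : Measurable D)
    (hεmeas : Measurable ε)
    (hindep : iIndepFun Z μ)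
    (hint : ∀ i, Integrable (Z i) μ)
    (ζ : Fin p → ℝ) (hζ : ∀ i, ζ i = ∫ ω, Z i ω ∂μ)
    (β₀ : ℝ) (φ : Fin p → ℝ)
    (hstruct : ∀ ω, T ω = β₀ * D ω + (∑ k, φ k * Z k ω) + ε ω)
    (hεint : Integrable ε μ)
    (hcond : μ[ε | MeasurableSpace.comap (fun ω i => Z i ω) inferInstance] =ᵐ[μ] 0)
    (j₁ j₂ : Fin p) (hj : j₁ ≠ j₂)
    (hTprod : Integrable (fun ω => (Z j₁ ω - ζ j₁) * (Z j₂ ω - ζ j₂) * T ω) μ)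
    (hDprod : Integrable (fun ω => (Z j₁ ω - ζ j₁) * (Z j₂ ω - ζ j₂) * D ω) μ)
    (hεprod : Integrable (fun ω => (Z j₁ ω - ζ j₁) * (Z j₂ ω - ζ j₂) * ε ω) μ)
    (hZprod : ∀ k, Integrable (fun ω => (Z j₁ ω - ζ j₁) * (Z j₂ ω - ζ j₂) * Z k ω) μ)
    (hden : ∫ ω, (Z j₁ ω - ζ j₁) * (Z j₂ ω - ζ j₂) * D ω ∂μ ≠ 0) :
    β₀ = (∫ ω, (Z j₁ ω - ζ j₁) * (Z j₂ ω - ζ j₂) * T ω ∂μ) /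
          (∫ ω, (Z j₁ ω - ζ j₁) * (Z j₂ ω - ζ j₂) * D ω ∂μ) := by
  classical
  -- centered variables have mean zero
  have hcent : ∀ i, ∫ ω, (Z i ω - ζ i) ∂μ = 0 := by
    intro i
    rw [integral_sub (hint i) (integrable_const _), integral_const, probReal_univ, smul_eq_mul, one_mul, hζ i, sub_self]
  -- E[W * Z k] = 0 for all k
  have hWZ : ∀ k, ∫ ω, (Z j₁ ω - ζ j₁) * (Z j₂ ω - ζ j₂) * Z k ω ∂μ = 0 := by
    intro k
    by_cases h1 : k = j₁
    · subst h1
      have hind : IndepFun ((fun x : ℝ => (x - ζ k) * x) ∘ Z k)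
          ((fun x : ℝ => x - ζ j₂) ∘ Z j₂) μ :=
        (hindep.indepFun hj).comp ((measurable_id.sub_const _).mul measurable_id)
          (measurable_id.sub_const _)
      have heq : (fun ω => (Z k ω - ζ k) * (Z j₂ ω - ζ j₂) * Z k ω)
          = ((fun x : ℝ => (x - ζ k) * x) ∘ Z k) * ((fun x : ℝ => x - ζ j₂) ∘ Z j₂) := by
        funext ω; simp [Function.comp]; ring
      rw [heq, hind.integral_mul_eq_mul_integral
        ((((hmeas k).sub_const _).mul (hmeas k)).aestronglyMeasurable)
        (((hmeas j₂).sub_const _).aestronglyMeasurable)]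
      have : ∫ ω, ((fun x : ℝ => x - ζ j₂) ∘ Z j₂) ω ∂μ = 0 := hcent j₂
      rw [this, mul_zero]
    · by_cases h2 : k = j₂
      · subst h2
        have hind : IndepFun ((fun x : ℝ => x - ζ j₁) ∘ Z j₁)
            ((fun x : ℝ => (x - ζ k) * x) ∘ Z k) μ :=
          (hindep.indepFun hj).comp (measurable_id.sub_const _)
            ((measurable_id.sub_const _).mul measurable_id)
        have heq : (fun ω => (Z j₁ ω - ζ j₁) * (Z k ω - ζ k) * Z k ω)
            = ((fun x : ℝ => x - ζ j₁) ∘ Z j₁) * ((fun x : ℝ => (x - ζ k) * x) ∘ Z k) := by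
          funext ω; simp [Function.comp]; ring
        rw [heq, hind.integral_mul_eq_mul_integral
          (((hmeas j₁).sub_const _).aestronglyMeasurable)
          ((((hmeas k).sub_const _).mul (hmeas k)).aestronglyMeasurable)]
        have : ∫ ω, ((fun x : ℝ => x - ζ j₁) ∘ Z j₁) ω ∂μ = 0 := hcent j₁
        rw [this, zero_mul]
      · have hpair : IndepFun (fun ω => (Z j₂ ω, Z k ω)) (Z j₁) μ :=
          hindep.indepFun_prodMk hmeas j₂ k j₁ (Ne.symm hj) h1
        have hind : IndepFun ((fun q : ℝ × ℝ => (q.1 - ζ j₂) * q.2) ∘ (fun ω => (Z j₂ ω, Z k ω)))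
            ((fun x : ℝ => x - ζ j₁) ∘ Z j₁) μ :=
          hpair.comp ((measurable_fst.sub_const _).mul measurable_snd)
            (measurable_id.sub_const _)
        have heq : (fun ω => (Z j₁ ω - ζ j₁) * (Z j₂ ω - ζ j₂) * Z k ω)
            = ((fun q : ℝ × ℝ => (q.1 - ζ j₂) * q.2) ∘ (fun ω => (Z j₂ ω, Z k ω)))
              * ((fun x : ℝ => x - ζ j₁) ∘ Z j₁) := by
          funext ω; simp [Function.comp]; ring
        rw [heq, hind.integral_mul_eq_mul_integral
          ((((hmeas j₂).sub_const _).mul (hmeas k)).aestronglyMeasurable)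
          (((hmeas j₁).sub_const _).aestronglyMeasurable)]
        have : ∫ ω, ((fun x : ℝ => x - ζ j₁) ∘ Z j₁) ω ∂μ = 0 := hcent j₁
        rw [this, mul_zero]
  -- E[W * ε] = 0 via the conditional expectation
  have hgmeas : Measurable (fun ω i => Z i ω : Ω → Fin p → ℝ) := measurable_pi_iff.mpr hmeas
  have hm : (MeasurableSpace.comap (fun ω i => Z i ω) inferInstance : MeasurableSpace Ω) ≤ _ :=
    hgmeas.comap_le
  set m := MeasurableSpace.comap (fun ω i => Z i ω) inferInstance with hm_def
  haveI : SigmaFinite (μ.trim hm) := by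
    haveI : IsFiniteMeasure (μ.trim hm) := by
      constructor
      rw [trim_measurableSet_eq hm MeasurableSet.univ]
      exact measure_lt_top μ _
    infer_instance
  have hWm : StronglyMeasurable[m] (fun ω => (Z j₁ ω - ζ j₁) * (Z j₂ ω - ζ j₂)) := by
    have hg : Measurable[m] (fun ω i => Z i ω : Ω → Fin p → ℝ) := Measurable.of_comap_le le_rfl
    exact ((((measurable_pi_apply j₁).comp hg).sub measurable_const).mul
      (((measurable_pi_apply j₂).comp hg).sub measurable_const)).stronglyMeasurable
  have hWε : ∫ ω, (Z j₁ ω - ζ j₁) * (Z j₂ ω - ζ j₂) * ε ω ∂μ = 0 := by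
    have hfe : Integrable ((fun ω => (Z j₁ ω - ζ j₁) * (Z j₂ ω - ζ j₂)) * ε) μ := hεprod
    have h2 : μ[(fun ω => (Z j₁ ω - ζ j₁) * (Z j₂ ω - ζ j₂)) * ε | m]
        =ᵐ[μ] (fun ω => (Z j₁ ω - ζ j₁) * (Z j₂ ω - ζ j₂)) * μ[ε | m] :=
      condExp_mul_of_stronglyMeasurable_left hWm hfe hεint
    have h3 : (fun ω => (Z j₁ ω - ζ j₁) * (Z j₂ ω - ζ j₂)) * μ[ε | m] =ᵐ[μ] 0 := by
      filter_upwards [hcond] with ω hω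
      simp [hω]
    calc ∫ ω, (Z j₁ ω - ζ j₁) * (Z j₂ ω - ζ j₂) * ε ω ∂μ
        = ∫ ω, (μ[(fun ω => (Z j₁ ω - ζ j₁) * (Z j₂ ω - ζ j₂)) * ε | m]) ω ∂μ :=
          (integral_condExp hm).symm
      _ = ∫ ω, (0 : Ω → ℝ) ω ∂μ := integral_congr_ae (h2.trans h3)
      _ = 0 := by simp
  -- main computation
  have hsum : ∀ ω, ((Z j₁ ω - ζ j₁) * (Z j₂ ω - ζ j₂)) * (∑ k, φ k * Z k ω)
      = ∑ k, φ k * ((Z j₁ ω - ζ j₁) * (Z j₂ ω - ζ j₂) * Z k ω) := by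
    intro ω
    rw [Finset.mul_sum]
    exact Finset.sum_congr rfl fun k _ => by ring
  have h1 : ∀ ω, (Z j₁ ω - ζ j₁) * (Z j₂ ω - ζ j₂) * T ω
      = (β₀ * ((Z j₁ ω - ζ j₁) * (Z j₂ ω - ζ j₂) * D ω)
          + ∑ k, φ k * ((Z j₁ ω - ζ j₁) * (Z j₂ ω - ζ j₂) * Z k ω))
        + (Z j₁ ω - ζ j₁) * (Z j₂ ω - ζ j₂) * ε ω := by
    intro ω
    rw [hstruct ω, ← hsum ω]
    ring
  have hiZ : Integrable (fun ω => ∑ k, φ k * ((Z j₁ ω - ζ j₁) * (Z j₂ ω - ζ j₂) * Z k ω)) μ :=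
    integrable_finset_sum _ fun k _ => (hZprod k).const_mul _
  have key : ∫ ω, (Z j₁ ω - ζ j₁) * (Z j₂ ω - ζ j₂) * T ω ∂μ
      = β₀ * ∫ ω, (Z j₁ ω - ζ j₁) * (Z j₂ ω - ζ j₂) * D ω ∂μ := by
    calc ∫ ω, (Z j₁ ω - ζ j₁) * (Z j₂ ω - ζ j₂) * T ω ∂μ
        = ∫ ω, ((β₀ * ((Z j₁ ω - ζ j₁) * (Z j₂ ω - ζ j₂) * D ω)
            + ∑ k, φ k * ((Z j₁ ω - ζ j₁) * (Z j₂ ω - ζ j₂) * Z k ω))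
            + (Z j₁ ω - ζ j₁) * (Z j₂ ω - ζ j₂) * ε ω) ∂μ :=
          integral_congr_ae (Filter.EventuallyEq.of_eq (funext h1))
      _ = (∫ ω, β₀ * ((Z j₁ ω - ζ j₁) * (Z j₂ ω - ζ j₂) * D ω) ∂μ
            + ∫ ω, (∑ k, φ k * ((Z j₁ ω - ζ j₁) * (Z j₂ ω - ζ j₂) * Z k ω)) ∂μ)
            + ∫ ω, (Z j₁ ω - ζ j₁) * (Z j₂ ω - ζ j₂) * ε ω ∂μ := by
          have hAB : Integrable (fun ω => β₀ * ((Z j₁ ω - ζ j₁) * (Z j₂ ω - ζ j₂) * D ω)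
              + ∑ k, φ k * ((Z j₁ ω - ζ j₁) * (Z j₂ ω - ζ j₂) * Z k ω)) μ :=
            (hDprod.const_mul β₀).add hiZ
          rw [integral_add hAB hεprod, integral_add (hDprod.const_mul β₀) hiZ]
      _ = β₀ * ∫ ω, (Z j₁ ω - ζ j₁) * (Z j₂ ω - ζ j₂) * D ω ∂μ := by
          rw [hWε, integral_finset_sum _ fun k _ => (hZprod k).const_mul _,
            integral_const_mul]
          simp [integral_const_mul, hWZ]
  rw [key]
  field_simp
end

section
/- Suppose T = β_0 D + Σ_{k=1}^p φ_k Z_k + ε with E[ε | Z] = 0, where Z_1,...,Z_p are mutually independent with means ζ_j. Define the moment function m(β) = E[(Z_1 − ζ_1)(Z_2 − ζ_2)(T − β D)]. Then m(β_0) = 0; moreover, if E[(Z_1 − ζ_1)(Z_2 − ζ_2) D] ≠ 0, then β_0 is the unique real number β with m(β) = 0. -/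
open MeasureTheory ProbabilityTheory

/-- The interaction moment function `m(β) = E[(Z₁−ζ₁)(Z₂−ζ₂)(T − βD)]` vanishes at the
true `β₀`, and if the interaction relevance `E[(Z₁−ζ₁)(Z₂−ζ₂)D] ≠ 0` holds then `β₀`
is its unique zero. -/
theorem interaction_moment_unique_zero
    {Ω : Type*} [MeasurableSpace Ω] (μ : Measure Ω) [IsProbabilityMeasure μ]
    {p : ℕ} (hp : 2 ≤ p) (Z : Fin p → Ω → ℝ) (T D ε : Ω → ℝ)
    (hmeas : ∀ i, Measurable (Z i)) (hTmeas : Measurable T) (hDmeas : Measurable D)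
    (hεmeas : Measurable ε)
    (hindep : iIndepFun Z μ)
    (hint : ∀ i, Integrable (Z i) μ)
    (ζ : Fin p → ℝ) (hζ : ∀ i, ζ i = ∫ ω, Z i ω ∂μ)
    (β₀ : ℝ) (φ : Fin p → ℝ)
    (hstruct : ∀ ω, T ω = β₀ * D ω + (∑ k, φ k * Z k ω) + ε ω)
    (hεint : Integrable ε μ)
    (hcond : μ[ε | MeasurableSpace.comap (fun ω i => Z i ω) inferInstance] =ᵐ[μ] 0)
    (j₁ j₂ : Fin p) (hj : j₁ ≠ j₂)
    (hTprod : Integrable (fun ω => (Z j₁ ω - ζ j₁) * (Z j₂ ω - ζ j₂) * T ω) μ)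
    (hDprod : Integrable (fun ω => (Z j₁ ω - ζ j₁) * (Z j₂ ω - ζ j₂) * D ω) μ)
    (hεprod : Integrable (fun ω => (Z j₁ ω - ζ j₁) * (Z j₂ ω - ζ j₂) * ε ω) μ)
    (hZprod : ∀ k, Integrable (fun ω => (Z j₁ ω - ζ j₁) * (Z j₂ ω - ζ j₂) * Z k ω) μ)
    (m : ℝ → ℝ)
    (hm : ∀ β, m β = ∫ ω, (Z j₁ ω - ζ j₁) * (Z j₂ ω - ζ j₂) * (T ω - β * D ω) ∂μ) :
    m β₀ = 0 ∧
      ((∫ ω, (Z j₁ ω - ζ j₁) * (Z j₂ ω - ζ j₂) * D ω ∂μ) ≠ 0 →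
        ∀ β : ℝ, m β = 0 → β = β₀) := by
  set W : Ω → ℝ := fun ω => (Z j₁ ω - ζ j₁) * (Z j₂ ω - ζ j₂) with hWdef
  -- centered means
  have hcmean : ∀ i, (∫ ω, Z i ω - ζ i ∂μ) = 0 := by
    intro i
    rw [integral_sub (hint i) (integrable_const _), integral_const]
    simp [hζ i]
  -- E[W Z k] = 0 for all k
  have hWZ : ∀ k, (∫ ω, W ω * Z k ω ∂μ) = 0 := by
    intro k
    by_cases hk1 : k = j₁
    · subst hk1
      have hInd : IndepFun (fun ω => (Z k ω - ζ k) * Z k ω)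
          (fun ω => Z j₂ ω - ζ j₂) μ :=
        (hindep.indepFun hj).comp
          (show Measurable fun x : ℝ => (x - ζ k) * x by fun_prop)
          (show Measurable fun x : ℝ => x - ζ j₂ by fun_prop)
      have := hInd.integral_fun_mul_eq_mul_integral
        (((hmeas k).sub measurable_const).mul (hmeas k)).aestronglyMeasurable
        ((hmeas j₂).sub measurable_const).aestronglyMeasurable
      calc (∫ ω, W ω * Z k ω ∂μ)
          = ∫ ω, ((Z k ω - ζ k) * Z k ω) * (Z j₂ ω - ζ j₂) ∂μ := by
            apply integral_congr_ae; filter_upwards with ω; simp [hWdef]; ring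
        _ = 0 := by rw [this, hcmean j₂, mul_zero]
    · by_cases hk2 : k = j₂
      · subst hk2
        have hInd : IndepFun (fun ω => Z j₁ ω - ζ j₁)
            (fun ω => (Z k ω - ζ k) * Z k ω) μ :=
          (hindep.indepFun hj).comp
            (show Measurable fun x : ℝ => x - ζ j₁ by fun_prop)
            (show Measurable fun x : ℝ => (x - ζ k) * x by fun_prop)
        have := hInd.integral_fun_mul_eq_mul_integral
          ((hmeas j₁).sub measurable_const).aestronglyMeasurable
          (((hmeas k).sub measurable_const).mul (hmeas k)).aestronglyMeasurable
        calc (∫ ω, W ω * Z k ω ∂μ)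
            = ∫ ω, (Z j₁ ω - ζ j₁) * ((Z k ω - ζ k) * Z k ω) ∂μ := by
              apply integral_congr_ae; filter_upwards with ω; simp [hWdef]; ring
          _ = 0 := by rw [this, hcmean j₁, zero_mul]
      · have hpk : IndepFun (fun ω => (Z j₁ ω, Z j₂ ω)) (Z k) μ :=
          hindep.indepFun_prodMk hmeas j₁ j₂ k (fun h => hk1 h.symm) (fun h => hk2 h.symm)
        have hInd : IndepFun W (Z k) μ := by
          have := hpk.comp
            (show Measurable fun q : ℝ × ℝ => (q.1 - ζ j₁) * (q.2 - ζ j₂) by fun_prop)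
            (measurable_id : Measurable fun x : ℝ => x)
          exact this
        have hIndW : IndepFun (fun ω => Z j₁ ω - ζ j₁) (fun ω => Z j₂ ω - ζ j₂) μ :=
          (hindep.indepFun hj).comp
            (show Measurable fun x : ℝ => x - ζ j₁ by fun_prop)
            (show Measurable fun x : ℝ => x - ζ j₂ by fun_prop)
        have hWint : (∫ ω, W ω ∂μ) = 0 := by
          have h2 := hIndW.integral_fun_mul_eq_mul_integral
            ((hmeas j₁).sub measurable_const).aestronglyMeasurable
            ((hmeas j₂).sub measurable_const).aestronglyMeasurable
          calc (∫ ω, W ω ∂μ)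
              = (∫ ω, Z j₁ ω - ζ j₁ ∂μ) * ∫ ω, Z j₂ ω - ζ j₂ ∂μ := h2
            _ = 0 := by rw [hcmean j₁, zero_mul]
        have := hInd.integral_fun_mul_eq_mul_integral
          (((hmeas j₁).sub measurable_const).mul
            ((hmeas j₂).sub measurable_const)).aestronglyMeasurable
          (hmeas k).aestronglyMeasurable
        rw [this, hWint, zero_mul]
  -- E[W ε] = 0
  have hWε : (∫ ω, W ω * ε ω ∂μ) = 0 := by
    have hle : MeasurableSpace.comap (fun ω i => Z i ω)
        (inferInstance : MeasurableSpace (Fin p → ℝ)) ≤ ‹MeasurableSpace Ω› :=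
      (measurable_pi_lambda _ fun i => hmeas i).comap_le
    let m₀ : MeasurableSpace Ω :=
      MeasurableSpace.comap (fun ω i => Z i ω) inferInstance
    have hWsm : StronglyMeasurable[m₀] W := by
      have : Measurable[m₀] W := by
        have h1 : Measurable[m₀] (fun ω => (fun i => Z i ω)) :=
          measurable_iff_comap_le.mpr le_rfl
        have h2 : Measurable fun x : Fin p → ℝ => (x j₁ - ζ j₁) * (x j₂ - ζ j₂) := by
          fun_prop
        exact h2.comp h1
      exact this.stronglyMeasurable
    have hpull : μ[W * ε | m₀] =ᵐ[μ] W * μ[ε | m₀] :=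
      condExp_mul_of_stronglyMeasurable_left hWsm (by exact hεprod) hεint
    have : μ[W * ε | m₀] =ᵐ[μ] 0 := by
      refine hpull.trans ?_
      filter_upwards [hcond] with ω hω
      simp [m₀, hω]
    have h1 := integral_condExp (μ := μ) (f := W * ε) hle
    rw [integral_congr_ae this] at h1
    simpa using h1.symm
  -- E[W T] = β₀ * E[W D]
  have hWT : (∫ ω, W ω * T ω ∂μ)
      = β₀ * (∫ ω, W ω * D ω ∂μ) := by
    have hsum_int : Integrable (fun ω => ∑ k, φ k * (W ω * Z k ω)) μ :=
      integrable_finset_sum _ fun k _ => (hZprod k).const_mul (φ k)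
    have heq : (fun ω => W ω * T ω)
        = fun ω => β₀ * (W ω * D ω) + (∑ k, φ k * (W ω * Z k ω)) + W ω * ε ω := by
      funext ω
      have hs : W ω * (∑ k, φ k * Z k ω) = ∑ k, φ k * (W ω * Z k ω) := by
        rw [Finset.mul_sum]; exact Finset.sum_congr rfl fun k _ => by ring
      rw [hstruct ω, mul_add, mul_add, hs]; ring
    have hA : Integrable
        (fun ω => β₀ * (W ω * D ω) + ∑ k, φ k * (W ω * Z k ω)) μ :=
      (hDprod.const_mul β₀).add hsum_int
    have hB : Integrable (fun ω => β₀ * (W ω * D ω)) μ := hDprod.const_mul β₀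
    rw [heq, integral_add hA hεprod,
      integral_add hB hsum_int, integral_finset_sum _
        (fun k _ => (hZprod k).const_mul (φ k)), integral_const_mul]
    have : ∀ k ∈ Finset.univ, (∫ ω, φ k * (W ω * Z k ω) ∂μ) = 0 := by
      intro k _
      rw [integral_const_mul, hWZ k, mul_zero]
    rw [Finset.sum_congr rfl this, hWε]
    simp
  -- m β = (β₀ - β) * ∫ W D
  have hmβ : ∀ β, m β = (β₀ - β) * (∫ ω, W ω * D ω ∂μ) := by
    intro β
    rw [hm β]
    have : (fun ω => (Z j₁ ω - ζ j₁) * (Z j₂ ω - ζ j₂) * (T ω - β * D ω))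
        = fun ω => W ω * T ω - β * (W ω * D ω) := by
      funext ω; simp [hWdef]; ring
    rw [this, integral_sub hTprod (hDprod.const_mul β), integral_const_mul, hWT]
    ring
  constructor
  · rw [hmβ β₀]; ring
  · intro hne β hβ
    rw [hmβ β] at hβ
    have : β₀ - β = 0 := by
      rcases mul_eq_zero.mp hβ with h | h
      · exact h
      · exact absurd h hne
    linarith
end

section
/- Suppose T = β_0 D + Σ_{k=1}^p φ_k Z_k + ε with E[ε | Z] = 0, Z_1,...,Z_p mutually independent with means ζ_j. For 2 ≤ k ≤ p let I_k(Z; ζ) denote the vector of all centered k-th order interactions ∏_{j∈S}(Z_j − ζ_j), S ⊆ {1,...,p}, |S| = k, and suppose the stacked vector E[ I_{2:q}(Z; ζ) · D ] has at least one nonzero entry for some q ≤ p. Then the affine map β ↦ E[ I_{2:q}(Z; ζ)(T − β D) ] has β_0 as its unique zero. -/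
open MeasureTheory ProbabilityTheory

/-- Product of independent real random variables over a finset, times one more
independent variable: the integral factorizes. -/
lemma indep_integral_prod_mul {Ω : Type*} [MeasurableSpace Ω] {μ : Measure Ω}
    {ι : Type*} [DecidableEq ι] {g : ι → Ω → ℝ}
    (hindep : iIndepFun g μ)
    (hmeas : ∀ i, Measurable (g i)) {S : Finset ι} {k : ι} (hk : k ∉ S) :
    ∫ ω, (∏ j ∈ S, g j ω) * g k ω ∂μ
      = (∫ ω, ∏ j ∈ S, g j ω ∂μ) * ∫ ω, g k ω ∂μ := by
  have hfn : (∏ j ∈ S, g j) = fun ω => ∏ j ∈ S, g j ω :=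
    funext fun ω => Finset.prod_apply ω S g
  have h := (hindep.indepFun_finsetProd_of_notMem hmeas hk).integral_mul_eq_mul_integral
    (by rw [hfn]; exact (Finset.measurable_prod S (fun j _ => hmeas j)).aestronglyMeasurable)
    (hmeas k).aestronglyMeasurable
  rw [show ((∏ j ∈ S, g j) * g k) = fun ω => (∏ j ∈ S, g j ω) * g k ω from
      funext fun ω => by simp [hfn], hfn] at h
  exact h

/-- Integral of a product of centered independent variables over a nonempty finset is zero. -/
lemma centered_prod_integral_zero {Ω : Type*} [MeasurableSpace Ω] {μ : Measure Ω}
    [IsProbabilityMeasure μ] {ι : Type*} [DecidableEq ι] {g : ι → Ω → ℝ}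
    (hindep : iIndepFun g μ)
    (hmeas : ∀ i, Measurable (g i)) (hzero : ∀ i, ∫ ω, g i ω ∂μ = 0)
    {S : Finset ι} (hS : S.Nonempty) : ∫ ω, ∏ j ∈ S, g j ω ∂μ = 0 := by
  obtain ⟨i, hi⟩ := hS
  have h1 : ∀ ω, ∏ j ∈ S, g j ω = (∏ j ∈ S.erase i, g j ω) * g i ω := by
    intro ω; rw [Finset.prod_erase_mul S _ hi]
  simp only [h1]
  rw [indep_integral_prod_mul hindep hmeas (Finset.notMem_erase i S), hzero i, mul_zero]

/-- Uncensored identification (Lemma 1): under the structural model with mutually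
independent instruments, if at least one centered interaction of order between 2 and `q`
is correlated with the exposure `D`, then `β₀` is the unique zero of the stacked
interaction moment map `β ↦ E[I_{2:q}(Z;ζ)(T − βD)]`. -/
theorem stacked_interaction_moment_unique_zero
    {Ω : Type*} [MeasurableSpace Ω] (μ : Measure Ω) [IsProbabilityMeasure μ]
    {p : ℕ} (Z : Fin p → Ω → ℝ) (T D ε : Ω → ℝ)
    (hmeas : ∀ i, Measurable (Z i)) (hTmeas : Measurable T) (hDmeas : Measurable D)
    (hεmeas : Measurable ε)
    (hindep : iIndepFun Z μ)
    (hint : ∀ i, Integrable (Z i) μ)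
    (ζ : Fin p → ℝ) (hζ : ∀ i, ζ i = ∫ ω, Z i ω ∂μ)
    (β₀ : ℝ) (φ : Fin p → ℝ)
    (hstruct : ∀ ω, T ω = β₀ * D ω + (∑ k, φ k * Z k ω) + ε ω)
    (hεint : Integrable ε μ)
    (hcond : μ[ε | MeasurableSpace.comap (fun ω i => Z i ω) inferInstance] =ᵐ[μ] 0)
    (q : ℕ) (hq : q ≤ p)
    (hTprod : ∀ S : Finset (Fin p),
      Integrable (fun ω => (∏ j ∈ S, (Z j ω - ζ j)) * T ω) μ)
    (hDprod : ∀ S : Finset (Fin p),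
      Integrable (fun ω => (∏ j ∈ S, (Z j ω - ζ j)) * D ω) μ)
    (hεprod : ∀ S : Finset (Fin p),
      Integrable (fun ω => (∏ j ∈ S, (Z j ω - ζ j)) * ε ω) μ)
    (hZprod : ∀ (S : Finset (Fin p)) (k : Fin p),
      Integrable (fun ω => (∏ j ∈ S, (Z j ω - ζ j)) * Z k ω) μ)
    (hrelevance : ∃ S : Finset (Fin p), 2 ≤ S.card ∧ S.card ≤ q ∧
      (∫ ω, (∏ j ∈ S, (Z j ω - ζ j)) * D ω ∂μ) ≠ 0) :
    ∀ β : ℝ,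
      (∀ S : Finset (Fin p), 2 ≤ S.card → S.card ≤ q →
        ∫ ω, (∏ j ∈ S, (Z j ω - ζ j)) * (T ω - β * D ω) ∂μ = 0) ↔ β = β₀ := by
  classical
  -- centered variables
  have hWmeas : ∀ j, Measurable (fun ω => Z j ω - ζ j) :=
    fun j => (hmeas j).sub measurable_const
  have hWindep : iIndepFun (fun j ω => Z j ω - ζ j) μ :=
    hindep.comp (fun j x => x - ζ j) (fun j => measurable_id.sub measurable_const)
  have hWzero : ∀ i, ∫ ω, Z i ω - ζ i ∂μ = 0 := by
    intro i
    rw [integral_sub (hint i) (integrable_const _), integral_const]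
    simp [hζ i]
  -- Step 1: E[∏ (Z_j - ζ_j)] = 0 for nonempty S
  have hprod0 : ∀ S : Finset (Fin p), S.Nonempty →
      ∫ ω, ∏ j ∈ S, (Z j ω - ζ j) ∂μ = 0 :=
    fun S hS => centered_prod_integral_zero hWindep hWmeas hWzero hS
  -- Step 2: E[∏_S (Z_j - ζ_j) * Z_k] = 0 for |S| ≥ 2
  have hprodZ : ∀ (S : Finset (Fin p)), 2 ≤ S.card → ∀ k : Fin p,
      ∫ ω, (∏ j ∈ S, (Z j ω - ζ j)) * Z k ω ∂μ = 0 := by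
    intro S hS k
    by_cases hk : k ∈ S
    · -- use the family g j = if j = k then (Z k - ζ k) * Z k else Z j - ζ j
      set g : Fin p → Ω → ℝ :=
        fun j ω => if j = k then (Z j ω - ζ j) * Z j ω else Z j ω - ζ j with hg
      have hgmeas : ∀ j, Measurable (g j) := by
        intro j
        rcases eq_or_ne j k with h | h
        · simp only [hg, if_pos h]; fun_prop
        · simp only [hg, if_neg h]; fun_prop
      have hgindep : iIndepFun g μ := by
        have := hindep.comp (fun j x => if j = k then (x - ζ j) * x else x - ζ j)
          (fun j => by
            rcases eq_or_ne j k with h | h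
            · simp only [if_pos h]; fun_prop
            · simp only [if_neg h]; fun_prop)
        exact this
      have h1 : ∀ ω, (∏ j ∈ S, (Z j ω - ζ j)) * Z k ω
          = (∏ j ∈ S.erase k, g j ω) * g k ω := by
        intro ω
        have : ∏ j ∈ S.erase k, g j ω = ∏ j ∈ S.erase k, (Z j ω - ζ j) :=
          Finset.prod_congr rfl fun j hj => by
            simp [hg, Finset.ne_of_mem_erase hj]
        have hgk : g k ω = (Z k ω - ζ k) * Z k ω := by simp [hg]
        rw [this, hgk, ← Finset.prod_erase_mul S _ hk]
        ring
      simp only [h1]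
      rw [indep_integral_prod_mul hgindep hgmeas (Finset.notMem_erase k S)]
      have herase : (S.erase k).Nonempty := by
        rw [← Finset.card_pos, Finset.card_erase_of_mem hk]
        omega
      have : ∫ ω, ∏ j ∈ S.erase k, g j ω ∂μ = 0 := by
        have heq : ∀ ω, ∏ j ∈ S.erase k, g j ω = ∏ j ∈ S.erase k, (Z j ω - ζ j) := by
          intro ω
          exact Finset.prod_congr rfl fun j hj => by
            simp [hg, Finset.ne_of_mem_erase hj]
        simp only [heq]
        exact hprod0 _ herase
      rw [this, zero_mul]
    · -- k ∉ S : use the family g j = if j = k then Z j else Z j - ζ j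
      set g : Fin p → Ω → ℝ :=
        fun j ω => if j = k then Z j ω else Z j ω - ζ j with hg
      have hgmeas : ∀ j, Measurable (g j) := by
        intro j
        rcases eq_or_ne j k with h | h
        · simp only [hg, if_pos h]; fun_prop
        · simp only [hg, if_neg h]; fun_prop
      have hgindep : iIndepFun g μ := by
        have := hindep.comp (fun j x => if j = k then x else x - ζ j)
          (fun j => by
            rcases eq_or_ne j k with h | h
            · simp only [if_pos h]; fun_prop
            · simp only [if_neg h]; fun_prop)
        exact this
      have h1 : ∀ ω, (∏ j ∈ S, (Z j ω - ζ j)) * Z k ω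
          = (∏ j ∈ S, g j ω) * g k ω := by
        intro ω
        have : ∏ j ∈ S, g j ω = ∏ j ∈ S, (Z j ω - ζ j) :=
          Finset.prod_congr rfl fun j hj => by
            simp [hg, show j ≠ k from fun h => hk (h ▸ hj)]
        have hgk : g k ω = Z k ω := by simp [hg]
        rw [this, hgk]
      simp only [h1]
      rw [indep_integral_prod_mul hgindep hgmeas hk]
      have : ∫ ω, ∏ j ∈ S, g j ω ∂μ = 0 := by
        have heq : ∀ ω, ∏ j ∈ S, g j ω = ∏ j ∈ S, (Z j ω - ζ j) := by
          intro ω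
          exact Finset.prod_congr rfl fun j hj => by
            simp [hg, show j ≠ k from fun h => hk (h ▸ hj)]
        simp only [heq]
        exact hprod0 _ (Finset.card_pos.mp (by omega))
      rw [this, zero_mul]
  -- Step 3: E[∏_S (Z_j - ζ_j) * ε] = 0
  have hprodε : ∀ S : Finset (Fin p),
      ∫ ω, (∏ j ∈ S, (Z j ω - ζ j)) * ε ω ∂μ = 0 := by
    intro S
    have hm : MeasurableSpace.comap (fun ω (i : Fin p) => Z i ω) inferInstance
        ≤ (inferInstance : MeasurableSpace Ω) :=
      (measurable_pi_iff.mpr hmeas).comap_le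
    have hZm : ∀ i,
        Measurable[MeasurableSpace.comap (fun ω (i : Fin p) => Z i ω) inferInstance] (Z i) :=
      fun i => by
        have h0 : Measurable[MeasurableSpace.comap (fun ω (i : Fin p) => Z i ω) inferInstance]
            (fun ω (i : Fin p) => Z i ω) := Measurable.of_comap_le le_rfl
        exact (measurable_pi_apply i).comp h0
    have hfm : StronglyMeasurable[MeasurableSpace.comap
          (fun ω (i : Fin p) => Z i ω) inferInstance]
        (fun ω => ∏ j ∈ S, (Z j ω - ζ j)) :=
      Measurable.stronglyMeasurable
        (Finset.measurable_prod S fun j _ => ((hZm j).sub measurable_const))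
    have hpull := condExp_mul_of_stronglyMeasurable_left hfm (hεprod S) hεint
    have h2 : (fun ω => ∏ j ∈ S, (Z j ω - ζ j))
        * μ[ε | MeasurableSpace.comap (fun ω (i : Fin p) => Z i ω) inferInstance]
          =ᵐ[μ] (0 : Ω → ℝ) := by
      filter_upwards [hcond] with ω hω
      simp only [Pi.mul_apply, hω, Pi.zero_apply, mul_zero]
    have h3 := integral_congr_ae (hpull.trans h2)
    have h4 := integral_condExp (μ := μ)
      (f := (fun ω => ∏ j ∈ S, (Z j ω - ζ j)) * ε) hm
    rw [h3] at h4
    simpa using h4.symm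
  -- Key identity
  have key : ∀ (S : Finset (Fin p)), 2 ≤ S.card → ∀ β : ℝ,
      ∫ ω, (∏ j ∈ S, (Z j ω - ζ j)) * (T ω - β * D ω) ∂μ
        = (β₀ - β) * ∫ ω, (∏ j ∈ S, (Z j ω - ζ j)) * D ω ∂μ := by
    intro S hS β
    have heq : ∀ ω, (∏ j ∈ S, (Z j ω - ζ j)) * (T ω - β * D ω)
        = (β₀ - β) * ((∏ j ∈ S, (Z j ω - ζ j)) * D ω)
          + ((∑ k, φ k * ((∏ j ∈ S, (Z j ω - ζ j)) * Z k ω))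
            + (∏ j ∈ S, (Z j ω - ζ j)) * ε ω) := by
      intro ω
      have hsum : ∑ k, φ k * ((∏ j ∈ S, (Z j ω - ζ j)) * Z k ω)
          = (∏ j ∈ S, (Z j ω - ζ j)) * ∑ k, φ k * Z k ω := by
        rw [Finset.mul_sum]
        exact Finset.sum_congr rfl fun k _ => by ring
      rw [hsum, hstruct ω]; ring
    have hD' : Integrable (fun ω => (β₀ - β) * ((∏ j ∈ S, (Z j ω - ζ j)) * D ω)) μ :=
      (hDprod S).const_mul _
    have hZ' : Integrable (fun ω => ∑ k, φ k * ((∏ j ∈ S, (Z j ω - ζ j)) * Z k ω)) μ :=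
      integrable_finset_sum _ fun k _ => (hZprod S k).const_mul _
    have hrest : Integrable (fun ω => (∑ k, φ k * ((∏ j ∈ S, (Z j ω - ζ j)) * Z k ω))
        + (∏ j ∈ S, (Z j ω - ζ j)) * ε ω) μ := hZ'.add (hεprod S)
    simp only [heq]
    rw [integral_add hD' hrest, integral_add hZ' (hεprod S),
      integral_const_mul, integral_finset_sum _ (fun k _ => (hZprod S k).const_mul _)]
    simp only [integral_const_mul]
    rw [hprodε S]
    have : ∀ k ∈ (Finset.univ : Finset (Fin p)),
        φ k * ∫ ω, (∏ j ∈ S, (Z j ω - ζ j)) * Z k ω ∂μ = 0 := by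
      intro k _; rw [hprodZ S hS k, mul_zero]
    rw [Finset.sum_congr rfl this]
    simp
  intro β
  constructor
  · intro h
    obtain ⟨S, hS2, hSq, hne⟩ := hrelevance
    have h0 := h S hS2 hSq
    rw [key S hS2 β] at h0
    rcases mul_eq_zero.mp h0 with h1 | h1
    · linarith
    · exact absurd h1 hne
  · rintro rfl
    intro S hS2 _
    rw [key S hS2 β, sub_self, zero_mul]
end
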